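/- Let K ⊆ ℝ^d be a convex body and let X₁, ..., X_n be points of K such that every ball B(z, ρ) with z ∈ K and B(z,ρ) ⊆ K contains at least one X_i, where ρ = δ₄ r for constants as in the covering lemma. Suppose A ⊆ K is open in K, and the points of {X₁,...,X_n} ∩ A are labelled X_{j₁},...,X_{j_k} in non-decreasing distance from X_{j₁}. If for every 2 ≤ ℓ ≤ k either ‖X_{j_ℓ} − X_{j₁}‖ < r or some earlier point X_{j_m} (m < ℓ) lies in W(X_{j_ℓ}, X_{j₁}, r), then the clique complex of the geometric graph at scale r on {X_{j₁},...,X_{j_k}} is contractible. -/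

import Mathlib

open Metric

def stdBasisVec {V : Type*} [DecidableEq V] (v : V) : V → ℝ := fun i => if i = v then 1 else 0

/-- The standard geometric realization of the clique complex of a finite simple graph `G`. -/
def cliqueRealization {V : Type*} [Fintype V] [DecidableEq V] (G : SimpleGraph V) :
    Set (V → ℝ) :=
  ⋃ s ∈ {s : Finset V | G.IsClique (s : Set V)}, convexHull ℝ (stdBasisVec '' (s : Set V))

/-- `W(x,y,r)`: the set of points `z` of the open ball `B(y, ‖y-x‖)` such that
`B(z,r) ⊇ B(x,r) ∩ B(y, ‖y-x‖)`. -/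
def W {d : ℕ} (x y : EuclideanSpace ℝ (Fin d)) (r : ℝ) : Set (EuclideanSpace ℝ (Fin d)) :=
  {z | z ∈ ball y (dist y x) ∧ ball x r ∩ ball y (dist y x) ⊆ ball z r}

/-- The geometric graph at scale `r` on the points `Y 0, …, Y (k-1)`: distinct indices are
adjacent iff the corresponding points are at distance at most `r`. -/
def geomGraph {k : ℕ} {d : ℕ} (Y : Fin k → EuclideanSpace ℝ (Fin d)) (r : ℝ) :
    SimpleGraph (Fin k) where
  Adj i j := i ≠ j ∧ dist (Y i) (Y j) ≤ r
  symm := by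
    constructor
    intro i j h
    exact ⟨h.1.symm, by rw [dist_comm]; exact h.2⟩
  loopless := by
    constructor
    intro i h
    exact h.1 rfl

lemma contractible_of_deform {E : Type*} [AddCommGroup E] [Module ℝ E]
    [TopologicalSpace E] [IsTopologicalAddGroup E] [ContinuousSMul ℝ E]
    {S T : Set E} (hTS : T ⊆ S) {L : E → E} (hL : Continuous L)
    (h1 : ∀ p ∈ S, ∀ t : ℝ, 0 ≤ t → t ≤ 1 → (1 - t) • p + t • L p ∈ S)
    (h2 : ∀ p ∈ S, L p ∈ T) (hT : ContractibleSpace ↥T) :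
    ContractibleSpace ↥S := by
  rw [contractible_iff_id_nullhomotopic] at hT ⊢
  obtain ⟨t0, Ht⟩ := hT
  have hF' : Continuous fun p : ↥S => (⟨L p, h2 _ p.2⟩ : ↥T) :=
    Continuous.subtype_mk (hL.comp continuous_subtype_val) _
  let F' : C(↥S, ↥T) := ⟨_, hF'⟩
  let ι : C(↥T, ↥S) := ⟨Set.inclusion hTS, continuous_inclusion hTS⟩
  have key : ∀ q : unitInterval × ↥S, (1 - (q.1 : ℝ)) • (q.2 : E) + (q.1 : ℝ) • L q.2 ∈ S :=
    fun q => h1 _ q.2.2 _ q.1.2.1 q.1.2.2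
  have Hcont : Continuous fun q : unitInterval × ↥S => ((⟨_, key q⟩ : ↥S)) := by
    apply Continuous.subtype_mk
    fun_prop
  have H1 : (ContinuousMap.id ↥S).Homotopic (ι.comp F') := by
    refine ⟨{ toFun := fun q => ⟨_, key q⟩
              continuous_toFun := Hcont
              map_zero_left := ?_
              map_one_left := ?_ }⟩
    · intro p; apply Subtype.ext; simp
    · intro p; apply Subtype.ext; simp [F', ι]
  have H2 : (ι.comp F').Homotopic (ContinuousMap.const _ (ι t0)) := by
    have h := ContinuousMap.Homotopic.comp (ContinuousMap.Homotopic.refl ι)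
      (ContinuousMap.Homotopic.comp Ht (ContinuousMap.Homotopic.refl F'))
    simpa [ContinuousMap.comp_assoc] using h
  exact ⟨ι t0, H1.trans H2⟩

lemma key_dist {d : ℕ} {x y m p : EuclideanSpace ℝ (Fin d)} {r : ℝ} (hr : 0 < r)
    (hxy : x ≠ y) (hm2 : ball x r ∩ ball y (dist y x) ⊆ ball m r)
    (hp1 : dist p x ≤ r) (hp2 : dist p y ≤ dist y x) : dist p m ≤ r := by
  set R := dist y x with hR
  have hR0 : 0 < R := dist_pos.2 (Ne.symm hxy)
  set t : ℝ := min (1/2) (r / (2 * R)) with htdef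
  have ht0 : 0 < t := lt_min (by norm_num) (div_pos hr (by linarith))
  have ht1 : t < 1 := lt_of_le_of_lt (min_le_left _ _) (by norm_num)
  have htR : t * R < r := by
    calc t * R ≤ (r / (2 * R)) * R :=
          mul_le_mul_of_nonneg_right (min_le_right _ _) hR0.le
    _ = r / 2 := by field_simp
    _ < r := by linarith
  obtain ⟨w, hwx, hwy⟩ : ∃ w : EuclideanSpace ℝ (Fin d),
      dist w x = t * R ∧ dist w y = (1 - t) * R := by
    refine ⟨x + t • (y - x), ?_, ?_⟩
    · rw [dist_eq_norm, add_sub_cancel_left, norm_smul, Real.norm_eq_abs,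
        abs_of_pos ht0, hR, dist_eq_norm, norm_sub_rev]
    · have hh : x + t • (y - x) - y = (1 - t) • (x - y) := by module
      rw [dist_eq_norm, hh, norm_smul, Real.norm_eq_abs,
        abs_of_pos (by linarith), hR, dist_eq_norm, norm_sub_rev x y]
  have hcl : p ∈ closure (ball x r ∩ ball y R) := by
    have htend : Filter.Tendsto (fun ε : ℝ => p + ε • (w - p)) (nhdsWithin 0 (Set.Ioi 0)) (nhds p) := by
      have hc : Continuous (fun ε : ℝ => p + ε • (w - p)) := by fun_prop
      have := hc.tendsto 0
      simp only [zero_smul, add_zero] at this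
      exact this.mono_left nhdsWithin_le_nhds
    refine mem_closure_of_tendsto htend ?_
    filter_upwards [Ioo_mem_nhdsGT_of_mem (Set.mem_Ico.2 ⟨le_refl (0:ℝ), one_pos⟩)] with ε hε
    obtain ⟨hε0, hε1⟩ := hε
    constructor
    · rw [mem_ball, dist_eq_norm]
      have heq : p + ε • (w - p) - x = (1 - ε) • (p - x) + ε • (w - x) := by module
      rw [heq]
      calc ‖(1 - ε) • (p - x) + ε • (w - x)‖ ≤ (1 - ε) * ‖p - x‖ + ε * ‖w - x‖ := by
            refine le_trans (norm_add_le _ _) ?_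
            rw [norm_smul, norm_smul, Real.norm_eq_abs, Real.norm_eq_abs,
              abs_of_pos (by linarith), abs_of_pos hε0]
        _ ≤ (1 - ε) * r + ε * (t * R) := by
            have h1 : ‖p - x‖ ≤ r := by rw [← dist_eq_norm]; exact hp1
            have h2 : ‖w - x‖ = t * R := by rw [← dist_eq_norm]; exact hwx
            rw [h2]
            exact add_le_add (mul_le_mul_of_nonneg_left h1 (by linarith)) le_rfl
        _ < (1 - ε) * r + ε * r := by
            have := mul_lt_mul_of_pos_left htR hε0
            linarith
        _ = r := by ring
    · rw [mem_ball, dist_eq_norm]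
      have heq : p + ε • (w - p) - y = (1 - ε) • (p - y) + ε • (w - y) := by module
      rw [heq]
      calc ‖(1 - ε) • (p - y) + ε • (w - y)‖ ≤ (1 - ε) * ‖p - y‖ + ε * ‖w - y‖ := by
            refine le_trans (norm_add_le _ _) ?_
            rw [norm_smul, norm_smul, Real.norm_eq_abs, Real.norm_eq_abs,
              abs_of_pos (by linarith), abs_of_pos hε0]
        _ ≤ (1 - ε) * R + ε * ((1 - t) * R) := by
            have h1 : ‖p - y‖ ≤ R := by rw [← dist_eq_norm]; exact hp2
            have h2 : ‖w - y‖ = (1 - t) * R := by rw [← dist_eq_norm]; exact hwy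
            rw [h2]
            exact add_le_add (mul_le_mul_of_nonneg_left h1 (by linarith)) le_rfl
        _ < R := by nlinarith [mul_pos (mul_pos hε0 ht0) hR0]
  have := closure_mono hm2 hcl
  rw [closure_ball m hr.ne'] at this
  exact mem_closedBall.1 this

noncomputable def vmap {k : ℕ} (f : Fin k → Fin k) : (Fin k → ℝ) →ₗ[ℝ] (Fin k → ℝ) :=
  ∑ j, (LinearMap.proj j).smulRight (stdBasisVec (f j))

lemma vmap_basis {k : ℕ} (f : Fin k → Fin k) (j : Fin k) :
    vmap f (stdBasisVec j) = stdBasisVec (f j) := by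
  simp only [vmap, LinearMap.sum_apply, LinearMap.coe_smulRight, LinearMap.proj_apply]
  rw [show (∑ j', stdBasisVec j j' • stdBasisVec (f j') : Fin k → ℝ)
      = ∑ j', if j' = j then stdBasisVec (f j') else 0 by
    refine Finset.sum_congr rfl fun j' _ => ?_
    by_cases h : j' = j <;> simp [stdBasisVec, h]]
  simp

lemma vmap_image_hull {k : ℕ} (f : Fin k → Fin k) (s : Finset (Fin k)) :
    vmap f '' (convexHull ℝ (stdBasisVec '' (s : Set (Fin k))))
      = convexHull ℝ (stdBasisVec '' ((s.image f : Finset (Fin k)) : Set (Fin k))) := by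
  rw [(vmap f).image_convexHull]
  congr 1
  rw [Finset.coe_image, ← Set.image_comp, ← Set.image_comp]
  exact Set.image_congr fun j _ => vmap_basis f j

def realOn {k : ℕ} (G : SimpleGraph (Fin k)) (ℓ : ℕ) : Set (Fin k → ℝ) :=
  ⋃ s ∈ {s : Finset (Fin k) | G.IsClique (s : Set (Fin k)) ∧ ∀ a ∈ s, a.val ≤ ℓ},
    convexHull ℝ (stdBasisVec '' (s : Set (Fin k)))

lemma realOn_mono {k : ℕ} (G : SimpleGraph (Fin k)) {ℓ ℓ' : ℕ} (h : ℓ ≤ ℓ') :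
    realOn G ℓ ⊆ realOn G ℓ' := by
  intro p hp
  simp only [realOn, Set.mem_iUnion, Set.mem_setOf_eq] at hp ⊢
  obtain ⟨s, ⟨h1, h2⟩, hps⟩ := hp
  exact ⟨s, ⟨h1, fun a ha => le_trans (h2 a ha) h⟩, hps⟩

lemma cliqueRealization_eq_realOn {k : ℕ} (G : SimpleGraph (Fin k)) :
    cliqueRealization G = realOn G k := by
  ext p
  simp only [cliqueRealization, realOn, Set.mem_iUnion, Set.mem_setOf_eq]
  exact ⟨fun ⟨s, h1, h2⟩ => ⟨s, ⟨h1, fun a _ => a.2.le⟩, h2⟩, fun ⟨s, h1, h2⟩ => ⟨s, h1.1, h2⟩⟩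

theorem stmt_19 (d n k : ℕ) (hk : 0 < k) (K : Set (EuclideanSpace ℝ (Fin d)))
    (hKconv : Convex ℝ K) (hKcomp : IsCompact K) (hKint : (interior K).Nonempty)
    (r ρ : ℝ) (hr : 0 < r) (hρ : 0 < ρ)
    (X : Fin n → EuclideanSpace ℝ (Fin d)) (hXK : ∀ i, X i ∈ K)
    (hcover : ∀ z ∈ K, ball z ρ ⊆ K → ∃ i, X i ∈ ball z ρ)
    (U A : Set (EuclideanSpace ℝ (Fin d))) (hU : IsOpen U) (hA : A = U ∩ K)
    (Y : Fin k → EuclideanSpace ℝ (Fin d)) (hYinj : Function.Injective Y)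
    (hYrange : Set.range Y = Set.range X ∩ A)
    (hsort : ∀ a b : Fin k, a ≤ b →
      dist (Y ⟨0, hk⟩) (Y a) ≤ dist (Y ⟨0, hk⟩) (Y b))
    (hdom : ∀ ℓ : Fin k, 0 < ℓ.val →
      dist (Y ℓ) (Y ⟨0, hk⟩) < r ∨
      ∃ m : Fin k, m < ℓ ∧ Y m ∈ W (Y ℓ) (Y ⟨0, hk⟩) r) :
    ContractibleSpace ↥(cliqueRealization (geomGraph Y r)) := by
  classical
  set G := geomGraph Y r with hGdef
  set z : Fin k := ⟨0, hk⟩ with hz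
  have hAdj : ∀ i j : Fin k, i ≠ j → dist (Y i) (Y j) ≤ r → G.Adj i j :=
    fun i j h1 h2 => ⟨h1, h2⟩
  have hAdjd : ∀ i j : Fin k, G.Adj i j → dist (Y i) (Y j) ≤ r := fun i j h => h.2
  suffices h : ∀ ℓ : ℕ, ContractibleSpace ↥(realOn G ℓ) by
    rw [cliqueRealization_eq_realOn]; exact h k
  intro ℓ
  induction ℓ with
  | zero =>
    have hmem : stdBasisVec z ∈ realOn G 0 := by
      simp only [realOn, Set.mem_iUnion, Set.mem_setOf_eq]
      refine ⟨{z}, ⟨by simpa using G.isClique_singleton z, ?_⟩, ?_⟩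
      · intro a ha
        rw [Finset.mem_singleton] at ha
        simp [ha, hz]
      · simp only [Finset.coe_singleton, Set.image_singleton]
        exact subset_convexHull ℝ _ (Set.mem_singleton _)
    have huniq : ∀ p ∈ realOn G 0, p = stdBasisVec z := by
      intro p hp
      simp only [realOn, Set.mem_iUnion, Set.mem_setOf_eq] at hp
      obtain ⟨s, ⟨hcl, hb⟩, hps⟩ := hp
      have hsub : s ⊆ {z} := by
        intro a ha
        have h0 : a = z := Fin.ext (by simpa [hz] using Nat.le_zero.1 (hb a ha))
        simp [h0]
      rcases Finset.subset_singleton_iff.1 hsub with h | h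
      · subst h; simp [convexHull_empty] at hps
      · subst h
        simpa only [Finset.coe_singleton, Set.image_singleton, convexHull_singleton,
          Set.mem_singleton_iff] using hps
    rw [contractible_iff_id_nullhomotopic]
    refine ⟨⟨stdBasisVec z, hmem⟩, ?_⟩
    have hid : ContinuousMap.id ↥(realOn G 0) = ContinuousMap.const _ ⟨stdBasisVec z, hmem⟩ :=
      ContinuousMap.ext fun p => Subtype.ext (huniq _ p.2)
    rw [hid]
  | succ ℓ ih =>
    by_cases hlk : ℓ + 1 < k
    · set v : Fin k := ⟨ℓ + 1, hlk⟩ with hv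
      obtain ⟨m, hmv, hkey⟩ : ∃ m : Fin k, m < v ∧
          ∀ a : Fin k, a ≤ v → dist (Y a) (Y v) ≤ r → dist (Y a) (Y m) ≤ r := by
        rcases hdom v (Nat.succ_pos ℓ) with hcase | ⟨m, hm1, hm2⟩
        · refine ⟨z, by simp [hz, hv, Fin.lt_def], fun a hav _ => ?_⟩
          calc dist (Y a) (Y z) = dist (Y z) (Y a) := dist_comm _ _
            _ ≤ dist (Y z) (Y v) := hsort a v hav
            _ = dist (Y v) (Y z) := dist_comm _ _
            _ ≤ r := hcase.le
        · refine ⟨m, hm1, fun a hav ha => ?_⟩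
          refine key_dist hr ?_ hm2.2 ha ?_
          · intro hEq
            have := hYinj hEq
            simp [hv, hz, Fin.ext_iff] at this
          · calc dist (Y a) (Y z) = dist (Y z) (Y a) := dist_comm _ _
              _ ≤ dist (Y z) (Y v) := hsort a v hav
      set f : Fin k → Fin k := fun j => if j = v then m else j with hf
      have hins : ∀ s : Finset (Fin k), G.IsClique (s : Set (Fin k)) →
          (∀ a ∈ s, a.val ≤ ℓ + 1) → v ∈ s →
          G.IsClique ((insert m s : Finset (Fin k)) : Set (Fin k)) := by
        intro s hcl hb hvs
        have hadjm : ∀ b ∈ s, b ≠ m → G.Adj m b := by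
          intro b hb' hbm
          have hbv : dist (Y b) (Y v) ≤ r := by
            by_cases hbveq : b = v
            · simp [hbveq, hr.le]
            · exact hAdjd _ _ (hcl hb' hvs hbveq)
          have hble : b ≤ v := by rw [Fin.le_def]; exact hb b hb'
          have := hkey b hble hbv
          exact hAdj m b (Ne.symm hbm) (by rwa [dist_comm])
        rw [Finset.coe_insert]
        intro a ha b hb' hab
        rcases Set.mem_insert_iff.1 ha with rfl | ha'
        · rcases Set.mem_insert_iff.1 hb' with rfl | hb''
          · exact absurd rfl hab
          · exact hadjm b hb'' (Ne.symm hab)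
        · rcases Set.mem_insert_iff.1 hb' with rfl | hb''
          · exact (hadjm a ha' hab).symm
          · exact hcl ha' hb'' hab
      have hmval : m.val ≤ ℓ := Nat.lt_succ_iff.1 (by simpa [hv, Fin.lt_def] using hmv)
      have hbImg : ∀ s : Finset (Fin k), (∀ a ∈ s, a.val ≤ ℓ + 1) →
          ∀ a ∈ s.image f, a.val ≤ ℓ := by
        intro s hb a ha
        rw [Finset.mem_image] at ha
        obtain ⟨j, hj, rfl⟩ := ha
        by_cases hjv : j = v
        · simpa [hf, hjv] using hmval
        · have h1 : j.val ≤ ℓ + 1 := hb j hj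
          have h2 : j.val ≠ ℓ + 1 := fun hc => hjv (Fin.ext (by simp [hv, hc]))
          simp only [hf, if_neg hjv]
          omega
      have himgid : ∀ s : Finset (Fin k), v ∉ s → s.image f = s := by
        intro s hvs
        have hfix : ∀ j ∈ s, f j = j := by
          intro j hj
          have hjv : j ≠ v := by rintro rfl; exact hvs hj
          simp [hf, hjv]
        calc s.image f = s.image id := Finset.image_congr fun j hj => hfix j hj
          _ = s := Finset.image_id
      have himgsub : ∀ s : Finset (Fin k), v ∈ s →
          (s.image f : Set (Fin k)) ⊆ ((insert m s : Finset (Fin k)) : Set (Fin k)) := by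
        intro s hvs a ha
        rw [Finset.coe_image] at ha
        obtain ⟨j, hj, rfl⟩ := ha
        by_cases hjv : j = v
        · simp [hf, hjv]
        · simp only [hf, if_neg hjv, Finset.coe_insert]
          exact Set.mem_insert_of_mem _ hj
      refine contractible_of_deform (realOn_mono G (Nat.le_succ ℓ))
        ((vmap f).continuous_of_finiteDimensional) ?_ ?_ ih
      · -- straight-line stays inside realOn G (ℓ+1)
        intro p hp t ht0 ht1
        simp only [realOn, Set.mem_iUnion, Set.mem_setOf_eq] at hp ⊢
        obtain ⟨s, ⟨hcl, hb⟩, hps⟩ := hp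
        have hLp : vmap f p ∈ convexHull ℝ (stdBasisVec '' ((s.image f : Finset (Fin k)) : Set (Fin k))) := by
          rw [← vmap_image_hull]
          exact Set.mem_image_of_mem _ hps
        by_cases hvs : v ∈ s
        · refine ⟨insert m s, ⟨hins s hcl hb hvs, ?_⟩, ?_⟩
          · intro a ha
            rcases Finset.mem_insert.1 ha with rfl | ha'
            · exact hmval.trans (Nat.le_succ ℓ)
            · exact hb a ha'
          · have hp1 : p ∈ convexHull ℝ (stdBasisVec '' ((insert m s : Finset (Fin k)) : Set (Fin k))) :=
              convexHull_mono (Set.image_mono (by rw [Finset.coe_insert]; exact Set.subset_insert _ _)) hps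
            have hp2 : vmap f p ∈ convexHull ℝ (stdBasisVec '' ((insert m s : Finset (Fin k)) : Set (Fin k))) :=
              convexHull_mono (Set.image_mono (himgsub s hvs)) hLp
            exact (convex_convexHull ℝ _) hp1 hp2 (by linarith) ht0 (by ring)
        · refine ⟨s, ⟨hcl, hb⟩, ?_⟩
          rw [himgid s hvs] at hLp
          exact (convex_convexHull ℝ _) hps hLp (by linarith) ht0 (by ring)
      · -- image lands in realOn G ℓ
        intro p hp
        simp only [realOn, Set.mem_iUnion, Set.mem_setOf_eq] at hp ⊢
        obtain ⟨s, ⟨hcl, hb⟩, hps⟩ := hp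
        refine ⟨s.image f, ⟨?_, hbImg s hb⟩, ?_⟩
        · by_cases hvs : v ∈ s
          · exact (hins s hcl hb hvs).subset (himgsub s hvs)
          · rw [himgid s hvs]; exact hcl
        · rw [← vmap_image_hull]
          exact Set.mem_image_of_mem _ hps
    · have heq : realOn G (ℓ + 1) = realOn G ℓ := by
        ext p
        simp only [realOn, Set.mem_iUnion, Set.mem_setOf_eq]
        constructor
        · rintro ⟨s, ⟨h1, h2⟩, h3⟩
          refine ⟨s, ⟨h1, fun a ha => ?_⟩, h3⟩
          have := a.isLt; omega
        · rintro ⟨s, ⟨h1, h2⟩, h3⟩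
          exact ⟨s, ⟨h1, fun a ha => (h2 a ha).trans (Nat.le_succ ℓ)⟩, h3⟩
      rw [heq]; exact ih
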